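/- The Lambert W function (inverse on [0,∞) of w ↦ w e^w) satisfies W(z) = log z - log log z + O((log log z)/(log z)) as z → ∞. -/

import Mathlib

open Real Filter Asymptotics

/-- The Lambert W function (inverse on [0,∞) of w ↦ w eʷ) satisfies
W(z) = log z - log log z + O((log log z)/(log z)) as z → ∞. -/
theorem lambertW_asymptotics (W : ℝ → ℝ)
    (hW : ∀ z : ℝ, 0 ≤ z → 0 ≤ W z ∧ W z * Real.exp (W z) = z) :
    (fun z : ℝ => W z - (Real.log z - Real.log (Real.log z)))
      =O[atTop] (fun z : ℝ => Real.log (Real.log z) / Real.log z) := by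
  rw [isBigO_iff]
  refine ⟨2, ?_⟩
  filter_upwards [eventually_ge_atTop (Real.exp 1)] with z hz
  have hz0 : (0:ℝ) < z := lt_of_lt_of_le (Real.exp_pos 1) hz
  obtain ⟨hw0, hwe⟩ := hW z hz0.le
  set w := W z with hwdef
  -- w ≥ 1
  have hw1 : 1 ≤ w := by
    by_contra h
    push_neg at h
    have : w * Real.exp w < 1 * Real.exp 1 := by
      have h1 : w * Real.exp w ≤ w * Real.exp 1 :=
        mul_le_mul_of_nonneg_left (Real.exp_le_exp.2 h.le) hw0
      have h2 : w * Real.exp 1 < 1 * Real.exp 1 :=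
        mul_lt_mul_of_pos_right h (Real.exp_pos 1)
      linarith
    rw [hwe, one_mul] at this
    linarith
  have hwpos : (0:ℝ) < w := lt_of_lt_of_le one_pos hw1
  have hlw0 : 0 ≤ Real.log w := Real.log_nonneg hw1
  -- log z = w + log w
  have hlogz : Real.log z = w + Real.log w := by
    rw [← hwe, Real.log_mul hwpos.ne' (Real.exp_pos w).ne', Real.log_exp]
    ring
  have hsum_pos : 0 < w + Real.log w := by linarith
  -- error = log(w + log w) - log w
  have hkey : w - (Real.log z - Real.log (Real.log z))
      = Real.log (w + Real.log w) - Real.log w := by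
    rw [hlogz]; ring
  have hE0 : 0 ≤ Real.log (w + Real.log w) - Real.log w := by
    have := Real.log_le_log hwpos (by linarith : w ≤ w + Real.log w)
    linarith
  -- upper bound: log(w+log w) - log w ≤ log w / w
  have hEup : Real.log (w + Real.log w) - Real.log w ≤ Real.log w / w := by
    have h1 : Real.log ((w + Real.log w) / w) ≤ (w + Real.log w) / w - 1 :=
      Real.log_le_sub_one_of_pos (div_pos hsum_pos hwpos)
    rw [Real.log_div hsum_pos.ne' hwpos.ne'] at h1
    have h2 : (w + Real.log w) / w - 1 = Real.log w / w := by
      field_simp; ring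
    linarith [h1, h2 ▸ h1]
  -- log w / w ≤ 2 * (log log z / log z)
  have hlogw_le : Real.log w ≤ w := by
    have := Real.log_le_sub_one_of_pos hwpos
    linarith
  have hloglogz : Real.log (Real.log z) = Real.log (w + Real.log w) := by
    rw [hlogz]
  have hgnn : 0 ≤ Real.log (Real.log z) / Real.log z := by
    apply div_nonneg
    · rw [hloglogz]
      exact Real.log_nonneg (by linarith)
    · rw [hlogz]; linarith
  have hfin : Real.log w / w ≤ 2 * (Real.log (Real.log z) / Real.log z) := by
    rw [hloglogz, hlogz]
    have hlog_le : Real.log w ≤ Real.log (w + Real.log w) :=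
      Real.log_le_log hwpos (by linarith)
    have h2w : w + Real.log w ≤ 2 * w := by linarith
    calc Real.log w / w = 2 * (Real.log w / (2 * w)) := by
          field_simp
      _ ≤ 2 * (Real.log (w + Real.log w) / (w + Real.log w)) := by
          have : Real.log w / (2 * w) ≤ Real.log (w + Real.log w) / (w + Real.log w) := by
            apply div_le_div₀ (Real.log_nonneg (by linarith)) hlog_le hsum_pos h2w
          linarith
      _ = 2 * (Real.log (w + Real.log w) / (w + Real.log w)) := rfl
  rw [Real.norm_eq_abs, abs_of_nonneg (hkey ▸ hE0 : (0:ℝ) ≤ w - (log z - log (log z))), hkey]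
  calc Real.log (w + Real.log w) - Real.log w ≤ Real.log w / w := hEup
    _ ≤ 2 * (Real.log (Real.log z) / Real.log z) := hfin
    _ = 2 * ‖Real.log (Real.log z) / Real.log z‖ := by
        rw [Real.norm_eq_abs, abs_of_nonneg hgnn]
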